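/- Let A ∈ ℝ^{n×n} be row diagonally dominant of rank at least m < n, and let I, J be produced by m steps of cross approximation with complete pivoting. Then ‖A − A(:,J)A(I,J)^{-1}A(I,:)‖_max ≤ (m+1) · 2^{m+1} · σ_{m+1}(A). -/

import Mathlib

/-- The singular values of a real matrix: square roots of the eigenvalues of `AᴴA`. -/
noncomputable def svals {n m : ℕ} (A : Matrix (Fin n) (Fin m) ℝ) : Fin m → ℝ :=
  fun i => Real.sqrt ((show (A.transpose * A).IsHermitian by
    simpa [Matrix.conjTranspose_eq_transpose_of_trivial] using
      Matrix.isHermitian_conjTranspose_mul_self A).eigenvalues i)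

/-- `sigma A k` is the `k`-th largest singular value of `A` (1-indexed). -/
noncomputable def sigma {n : ℕ} (A : Matrix (Fin n) (Fin n) ℝ) (k : ℕ) : ℝ :=
  (Multiset.sort (Multiset.map (svals A) Finset.univ.val) (· ≤ ·)).getD (n - k) 0

/-- The entrywise maximum norm of a matrix. -/
noncomputable def maxNorm {n m : ℕ} (E : Matrix (Fin n) (Fin m) ℝ) : ℝ :=
  ⨆ i, ⨆ j, |E i j|

/-- `CrossApproxSeq A m R i j` records a run of `m` steps of cross approximation
with complete pivoting on `A`: `R 0 = A`, and at each step `k < m` the pivot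
`(i k, j k)` is a nonzero entry of maximal absolute value of the residual `R k`,
which is then updated by subtracting the corresponding rank-one cross. -/
def CrossApproxSeq {n : ℕ} (A : Matrix (Fin n) (Fin n) ℝ) (m : ℕ)
    (R : ℕ → Matrix (Fin n) (Fin n) ℝ) (i j : ℕ → Fin n) : Prop :=
  R 0 = A ∧ ∀ k < m,
    R k (i k) (j k) ≠ 0 ∧
    (∀ a b : Fin n, |R k a b| ≤ |R k (i k) (j k)|) ∧
    R (k + 1) =
      R k - (R k (i k) (j k))⁻¹ • Matrix.of (fun a b => R k a (j k) * R k (i k) b)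



section CrossApproxAux

open Matrix Finset




lemma sorted_getD_ge (l : List ℝ) (hs : l.Pairwise (· ≤ ·)) (c : ℝ) (N : ℕ)
    (hN : 0 < N) (hlen : N ≤ l.length)
    (hcount : N ≤ l.countP (fun x => decide (c ≤ x))) :
    c ≤ l.getD (l.length - N) 0 := by
  set p : ℝ → Bool := fun x => decide (c ≤ x) with hp
  by_contra hlt
  push_neg at hlt
  set idx := l.length - N with hidx
  have hidxlt : idx < l.length := by omega
  rw [List.getD_eq_getElem l 0 hidxlt] at hlt
  have htake : (l.take (idx+1)).countP p = 0 := by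
    rw [List.countP_eq_zero]
    intro a ha
    rw [List.mem_take_iff_getElem] at ha
    obtain ⟨i, hm, hi⟩ := ha
    have hile : i ≤ idx := by
      have := lt_min_iff.1 hm
      omega
    have hmono : l[i]'(lt_of_le_of_lt hile hidxlt) ≤ l[idx] := by
      have h2 := hs.rel_get_of_le
        (a := ⟨i, lt_of_le_of_lt hile hidxlt⟩) (b := ⟨idx, hidxlt⟩)
        (by rw [Fin.mk_le_mk]; exact hile)
      simpa [List.get_eq_getElem] using h2
    rw [← hi]
    simp only [hp, decide_eq_true_eq, not_le]
    exact lt_of_le_of_lt hmono hlt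
  have hcount2 : l.countP p ≤ N - 1 := by
    conv_lhs => rw [← List.take_append_drop (idx+1) l]
    rw [List.countP_append, htake, Nat.zero_add]
    calc (l.drop (idx+1)).countP p ≤ (l.drop (idx+1)).length := List.countP_le_length
      _ = l.length - (idx+1) := List.length_drop
      _ = N - 1 := by omega
  omega

lemma sigma_nonneg {n : ℕ} (A : Matrix (Fin n) (Fin n) ℝ) (k : ℕ) : 0 ≤ sigma A k := by
  unfold sigma
  set l := Multiset.sort (Multiset.map (svals A) Finset.univ.val) (· ≤ ·) with hl
  rcases lt_or_ge (n - k) l.length with h | h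
  · rw [List.getD_eq_getElem l 0 h]
    have hmem : l[n-k] ∈ (Multiset.map (svals A) Finset.univ.val) := by
      rw [← Multiset.sort_eq (α := ℝ) (Multiset.map (svals A) Finset.univ.val) (· ≤ ·), ← hl,
        Multiset.mem_coe]
      exact List.getElem_mem _
    obtain ⟨t, _, ht⟩ := Multiset.mem_map.1 hmem
    rw [← ht]
    exact Real.sqrt_nonneg _
  · rw [List.getD_eq_default l 0 h]

lemma sigma_ge_of_count {n N : ℕ} (A : Matrix (Fin n) (Fin n) ℝ) (c : ℝ)
    (hN : 0 < N) (hNn : N ≤ n)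
    (hcard : N ≤ (Finset.univ.filter (fun t : Fin n => c ≤ svals A t)).card) :
    c ≤ sigma A N := by
  unfold sigma
  set l := Multiset.sort (Multiset.map (svals A) Finset.univ.val) (· ≤ ·) with hl
  have hlen : l.length = n := by
    rw [hl, Multiset.length_sort]
    simp
  have hsorted : l.Pairwise (· ≤ ·) := Multiset.pairwise_sort _ _
  have hcount : N ≤ l.countP (fun x => decide (c ≤ x)) := by
    have hco : (l : Multiset ℝ) = Multiset.map (svals A) Finset.univ.val := by
      rw [hl, Multiset.sort_eq]
    have h2 : l.countP (fun x => decide (c ≤ x))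
        = Multiset.countP (fun x => c ≤ x) (Multiset.map (svals A) Finset.univ.val) := by
      rw [← hco]
      rfl
    rw [h2, Multiset.countP_map]
    refine le_trans hcard (le_of_eq ?_)
    rfl
  have hfin := sorted_getD_ge l hsorted c N hN (by omega) hcount
  rw [hlen] at hfin
  exact hfin


open Matrix Finset

section Tri
variable {N : ℕ}

lemma sum_restrict_Icc (M B : Matrix (Fin N) (Fin N) ℝ)
    (hupM : ∀ k l : Fin N, k < l → M k l = 0)
    (hlowB : ∀ k l : Fin N, k < l → B k l = 0)
    (k l : Fin N) :
    ∑ t, M k t * B t l = ∑ t ∈ Finset.Icc l k, M k t * B t l := by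
  refine (Finset.sum_subset (Finset.subset_univ _) ?_).symm
  intro t _ ht
  rw [Finset.mem_Icc, not_and_or] at ht
  rcases ht with h | h
  · rw [hlowB t l (lt_of_not_ge h), mul_zero]
  · rw [hupM k t (lt_of_not_ge h), zero_mul]

/-- column sums of the inverse of a unit lower triangular matrix with
entries bounded by 1 are bounded by `2 ^ (N - 1)`. -/
lemma lowerTri_inv_colsum_bound (L : Matrix (Fin N) (Fin N) ℝ)
    (hlow : ∀ k l : Fin N, k < l → L k l = 0)
    (hd : ∀ k, L k k = 1)
    (hent : ∀ k l : Fin N, |L k l| ≤ 1) :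
    (IsUnit L.det) ∧ ∀ jc : Fin N, ∑ t, |L⁻¹ t jc| ≤ 2 ^ (N - 1) := by
  have hbt : L.BlockTriangular ⇑OrderDual.toDual := by
    intro a b hab; exact hlow a b hab
  have hdet : L.det = 1 := by
    rw [Matrix.det_of_lowerTriangular L hbt]; simp [hd]
  have hu : IsUnit L.det := by rw [hdet]; exact isUnit_one
  refine ⟨hu, ?_⟩
  haveI := L.invertibleOfIsUnitDet hu
  set B := L⁻¹ with hB
  have hBlow : ∀ k l : Fin N, k < l → B k l = 0 := by
    have h2 := Matrix.blockTriangular_inv_of_blockTriangular hbt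
    intro a b hab; exact h2 hab
  have hmul : L * B = 1 := Matrix.mul_nonsing_inv L hu
  have eqn : ∀ k l : Fin N, ∑ t ∈ Finset.Icc l k, L k t * B t l
      = if k = l then (1:ℝ) else 0 := by
    intro k l
    rw [← sum_restrict_Icc L B hlow hBlow k l]
    have h3 := Matrix.ext_iff.2 hmul k l
    rw [Matrix.mul_apply] at h3
    rw [h3, Matrix.one_apply]
  have hBdiag : ∀ k : Fin N, B k k = 1 := by
    intro k
    have h4 := eqn k k
    simp only [Finset.Icc_self, Finset.sum_singleton, hd k, one_mul, if_pos rfl] at h4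
    exact h4
  have key : ∀ D : ℕ, ∀ k jc : Fin N, jc ≤ k → (k:ℕ) - (jc:ℕ) = D →
      ∑ t ∈ Finset.Icc jc k, |B t jc| ≤ 2 ^ D := by
    intro D
    induction D using Nat.strong_induction_on with
    | _ D IH =>
      intro k jc hle hD
      rcases eq_or_lt_of_le hle with heq | hlt
      · subst heq
        obtain rfl : D = 0 := by omega
        simp [hBdiag]
      · have hD1 : 1 ≤ D := by
          have hl2 : (jc:ℕ) < (k:ℕ) := hlt
          omega
        have hIns : Finset.Icc jc k = insert k (Finset.Ico jc k) :=
          (Finset.Ico_insert_right hle).symm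
        set k' : Fin N := ⟨(k:ℕ) - 1, lt_trans (by omega) k.isLt⟩ with hk'
        have hjk' : jc ≤ k' := by
          rw [Fin.le_def]
          have hl2 : (jc:ℕ) < (k:ℕ) := hlt
          simp only [hk']
          omega
        have hIco : Finset.Ico jc k = Finset.Icc jc k' := by
          ext t
          simp only [Finset.mem_Ico, Finset.mem_Icc]
          constructor
          · rintro ⟨h1, h2⟩
            refine ⟨h1, ?_⟩
            rw [Fin.le_def]
            have h5 : (t:ℕ) < (k:ℕ) := h2
            simp only [hk']
            omega
          · rintro ⟨h1, h2⟩
            refine ⟨h1, ?_⟩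
            rw [Fin.lt_def]
            have h5 : (t:ℕ) ≤ (k':ℕ) := h2
            simp only [hk'] at h5
            omega
        have hIH : ∑ t ∈ Finset.Ico jc k, |B t jc| ≤ 2 ^ (D - 1) := by
          rw [hIco]
          refine IH (D-1) (by omega) k' jc hjk' ?_
          simp only [hk']
          omega
        have hentry : |B k jc| ≤ ∑ t ∈ Finset.Ico jc k, |B t jc| := by
          have he := eqn k jc
          rw [if_neg (fun h => absurd h (ne_of_gt hlt))] at he
          rw [hIns, Finset.sum_insert (by simp), hd k, one_mul] at he
          have h6 : B k jc = -∑ t ∈ Finset.Ico jc k, L k t * B t jc := by linarith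
          rw [h6, abs_neg]
          calc |∑ t ∈ Finset.Ico jc k, L k t * B t jc|
              ≤ ∑ t ∈ Finset.Ico jc k, |L k t * B t jc| := Finset.abs_sum_le_sum_abs _ _
            _ ≤ ∑ t ∈ Finset.Ico jc k, |B t jc| := by
                refine Finset.sum_le_sum ?_
                intro t _
                rw [abs_mul]
                calc |L k t| * |B t jc| ≤ 1 * |B t jc| :=
                      mul_le_mul_of_nonneg_right (hent k t) (abs_nonneg _)
                  _ = |B t jc| := one_mul _
        rw [hIns, Finset.sum_insert (by simp)]
        calc |B k jc| + ∑ t ∈ Finset.Ico jc k, |B t jc|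
            ≤ 2 ^ (D-1) + 2 ^ (D-1) := add_le_add (le_trans hentry hIH) hIH
          _ = 2 ^ D := by rw [← two_mul, ← pow_succ']; congr 1; omega
  intro jc
  have hN : 0 < N := jc.pos
  set kl : Fin N := ⟨N - 1, by omega⟩ with hkl
  have hfull : ∑ t, |B t jc| = ∑ t ∈ Finset.Icc jc kl, |B t jc| := by
    refine (Finset.sum_subset (Finset.subset_univ _) ?_).symm
    intro t _ ht
    rw [Finset.mem_Icc, not_and_or] at ht
    rcases ht with h | h
    · rw [hBlow t jc (lt_of_not_ge h), abs_zero]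
    · exfalso; apply h
      rw [Fin.le_def]
      simp only [hkl]
      omega
  rw [hfull]
  calc ∑ t ∈ Finset.Icc jc kl, |B t jc| ≤ (2:ℝ) ^ ((kl:ℕ) - (jc:ℕ)) := by
        refine key _ _ _ ?_ rfl
        rw [Fin.le_def]
        simp only [hkl]
        omega
    _ ≤ 2 ^ (N - 1) := by
        apply pow_le_pow_right₀ (by norm_num)
        simp only [hkl]
        omega

/-- entries of the inverse of an upper triangular matrix with diagonally
dominant rows are bounded by `1 / |U l l|`. -/
lemma upperTri_inv_entry_bound (U : Matrix (Fin N) (Fin N) ℝ)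
    (hup : ∀ k l : Fin N, l < k → U k l = 0)
    (hdne : ∀ k, U k k ≠ 0)
    (hdd : ∀ k, ∑ l ∈ Finset.Ioi k, |U k l| ≤ |U k k|) :
    (IsUnit U.det) ∧ ∀ k l : Fin N, |U⁻¹ k l| ≤ 1 / |U l l| := by
  have hbt : U.BlockTriangular id := by
    intro a b hab; exact hup a b hab
  have hdet : U.det = ∏ k, U k k := Matrix.det_of_upperTriangular hbt
  have hu : IsUnit U.det := by
    rw [hdet]
    exact isUnit_iff_ne_zero.2 (Finset.prod_ne_zero_iff.2 (fun k _ => hdne k))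
  refine ⟨hu, ?_⟩
  haveI := U.invertibleOfIsUnitDet hu
  set B := U⁻¹ with hB
  have hBup : ∀ k l : Fin N, l < k → B k l = 0 := by
    have h2 := Matrix.blockTriangular_inv_of_blockTriangular hbt
    intro a b hab; exact h2 hab
  have hmul : U * B = 1 := Matrix.mul_nonsing_inv U hu
  have eqn : ∀ k l : Fin N, ∑ t ∈ Finset.Icc k l, U k t * B t l
      = if k = l then (1:ℝ) else 0 := by
    intro k l
    have hrestrict : ∑ t, U k t * B t l = ∑ t ∈ Finset.Icc k l, U k t * B t l := by
      refine (Finset.sum_subset (Finset.subset_univ _) ?_).symm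
      intro t _ ht
      rw [Finset.mem_Icc, not_and_or] at ht
      rcases ht with h | h
      · rw [hup k t (lt_of_not_ge h), zero_mul]
      · rw [hBup t l (lt_of_not_ge h), mul_zero]
    rw [← hrestrict]
    have h3 := Matrix.ext_iff.2 hmul k l
    rw [Matrix.mul_apply] at h3
    rw [h3, Matrix.one_apply]
  have key : ∀ D : ℕ, ∀ k l : Fin N, (l:ℕ) - (k:ℕ) = D → |B k l| ≤ 1 / |U l l| := by
    intro D
    induction D using Nat.strong_induction_on with
    | _ D IH =>
      intro k l hD
      rcases lt_trichotomy k l with hlt | heq | hgt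
      case inr.inr =>
        rw [hBup k l hgt, abs_zero]
        positivity
      case inr.inl =>
        subst heq
        have h4 := eqn k k
        simp only [Finset.Icc_self, Finset.sum_singleton, if_pos rfl] at h4
        rw [if_pos trivial] at h4
        have h5 : B k k = 1 / U k k := eq_one_div_of_mul_eq_one_left (by linarith [h4] : B k k * U k k = 1)
        rw [h5, abs_div, abs_one]
      case inl =>
        have hIns : Finset.Icc k l = insert k (Finset.Ioc k l) := by
          rw [Finset.Ioc_insert_left (le_of_lt hlt)]
        have he := eqn k l
        rw [if_neg (ne_of_lt hlt), hIns, Finset.sum_insert (by simp)] at he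
        have h6 : U k k * B k l = -∑ t ∈ Finset.Ioc k l, U k t * B t l := by linarith
        have h7 : |U k k| * |B k l| ≤ |U k k| * (1 / |U l l|) := by
          rw [← abs_mul, h6, abs_neg]
          calc |∑ t ∈ Finset.Ioc k l, U k t * B t l|
              ≤ ∑ t ∈ Finset.Ioc k l, |U k t| * |B t l| := by
                refine le_trans (Finset.abs_sum_le_sum_abs _ _) ?_
                refine le_of_eq (Finset.sum_congr rfl ?_)
                intro t _; rw [abs_mul]
            _ ≤ ∑ t ∈ Finset.Ioc k l, |U k t| * (1 / |U l l|) := by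
                refine Finset.sum_le_sum ?_
                intro t ht
                rw [Finset.mem_Ioc] at ht
                refine mul_le_mul_of_nonneg_left ?_ (abs_nonneg _)
                refine IH ((l:ℕ) - (t:ℕ)) ?_ t l rfl
                have h8 : (k:ℕ) < (t:ℕ) := ht.1
                have h9 : (t:ℕ) ≤ (l:ℕ) := ht.2
                have h10 : (k:ℕ) < (l:ℕ) := hlt
                omega
            _ = (∑ t ∈ Finset.Ioc k l, |U k t|) * (1 / |U l l|) := by
                rw [Finset.sum_mul]
            _ ≤ |U k k| * (1 / |U l l|) := by
                refine mul_le_mul_of_nonneg_right ?_ (by positivity)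
                refine le_trans (Finset.sum_le_sum_of_subset_of_nonneg ?_ ?_) (hdd k)
                · exact fun t ht => Finset.mem_Ioi.2 (Finset.mem_Ioc.1 ht).1
                · intro t _ _; exact abs_nonneg _
        have hUkk : 0 < |U k k| := abs_pos.2 (hdne k)
        exact le_of_mul_le_mul_left h7 hUkk
  intro k l
  exact key ((l:ℕ) - (k:ℕ)) k l rfl

end Tri



open Matrix Finset

lemma count_svals_ge {n N : ℕ} (A : Matrix (Fin n) (Fin n) ℝ)
    (cmap : Fin N → Fin n) (hinj : Function.Injective cmap) (c0 : ℝ) (hc0 : 0 ≤ c0)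
    (hq : ∀ v : Fin N → ℝ,
      c0 ^ 2 * (∑ l, v l ^ 2) ≤
        ∑ a, (A.mulVec (fun x => ∑ l, if x = cmap l then v l else 0) a) ^ 2) :
    N ≤ (Finset.univ.filter (fun t : Fin n => c0 ≤ svals A t)).card := by
  classical
  set hS : (A.transpose * A).IsHermitian := (by
    simpa [Matrix.conjTranspose_eq_transpose_of_trivial] using
      Matrix.isHermitian_conjTranspose_mul_self A) with hhS
  set μ : Fin n → ℝ := hS.eigenvalues with hμ
  set T : Finset (Fin n) := Finset.univ.filter (fun t => c0 ^ 2 ≤ μ t) with hT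
  -- it suffices to count eigenvalues ≥ c0 ^ 2
  have hsub : T ⊆ Finset.univ.filter (fun t : Fin n => c0 ≤ svals A t) := by
    intro t ht
    rw [hT, Finset.mem_filter] at ht
    rw [Finset.mem_filter]
    refine ⟨Finset.mem_univ t, ?_⟩
    have h1 : Real.sqrt (c0^2) ≤ Real.sqrt (μ t) := Real.sqrt_le_sqrt ht.2
    rwa [Real.sqrt_sq hc0] at h1
  refine le_trans ?_ (Finset.card_le_card hsub)
  by_contra hcard
  push_neg at hcard
  -- linear-algebra: found a nonzero kernel vector
  set Vm : Matrix (Fin n) (Fin n) ℝ := (hS.eigenvectorUnitary : Matrix (Fin n) (Fin n) ℝ)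
    with hVm
  have hunit1 : Vm * star Vm = 1 := Matrix.mem_unitaryGroup_iff.1 hS.eigenvectorUnitary.2
  have hspec : Aᴴ * A = Vm * diagonal μ * star Vm := by
    have := hS.spectral_theorem
    rw [Unitary.conjStarAlgAut_apply] at this
    rwa [RCLike.ofReal_real_eq_id, Function.id_comp] at this
  -- the extension-by-zero linear map
  set extL : (Fin N → ℝ) →ₗ[ℝ] (Fin n → ℝ) :=
    { toFun := fun v x => ∑ l, if x = cmap l then v l else 0
      map_add' := by
        intro v w
        funext x
        show (∑ l, if x = cmap l then (v + w) l else 0)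
          = (∑ l, if x = cmap l then v l else 0) + (∑ l, if x = cmap l then w l else 0)
        rw [← Finset.sum_add_distrib]
        refine Finset.sum_congr rfl (fun l _ => ?_)
        split <;> simp
      map_smul' := by
        intro r v
        funext x
        show (∑ l, if x = cmap l then (r • v) l else 0)
          = r • (∑ l, if x = cmap l then v l else 0)
        simp only [Pi.smul_apply, smul_eq_mul, Finset.mul_sum]
        refine Finset.sum_congr rfl (fun l _ => ?_)
        split <;> simp } with hextL
  set Φ : (Fin N → ℝ) →ₗ[ℝ] ({ t // t ∈ T } → ℝ) :=
    (LinearMap.funLeft ℝ ℝ (Subtype.val : {t // t ∈ T} → Fin n)).comp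
      ((Matrix.mulVecLin (star Vm)).comp extL) with hΦ
  have hnotinj : ¬ Function.Injective Φ := by
    intro hinjΦ
    have h2 := LinearMap.finrank_le_finrank_of_injective hinjΦ
    rw [Module.finrank_fintype_fun_eq_card, Module.finrank_fintype_fun_eq_card] at h2
    simp only [Fintype.card_fin, Fintype.card_coe] at h2
    omega
  rw [Function.not_injective_iff] at hnotinj
  obtain ⟨v1, v2, hv12, hne⟩ := hnotinj
  set u : Fin N → ℝ := v1 - v2 with hu
  have hu0 : u ≠ 0 := sub_ne_zero.2 hne
  have hΦu : Φ u = 0 := by rw [hu, map_sub, hv12, sub_self]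
  set x : Fin n → ℝ := extL u with hx
  set y : Fin n → ℝ := (star Vm) *ᵥ x with hy
  have hyT : ∀ t (ht : t ∈ T), y t = 0 := by
    intro t ht
    have := congrFun hΦu ⟨t, ht⟩
    exact this
  -- x evaluated at cmap l is u l
  have hxc : ∀ l, x (cmap l) = u l := by
    intro l
    show (∑ l', if cmap l = cmap l' then u l' else 0) = u l
    rw [Finset.sum_eq_single l]
    · simp
    · intro b _ hb
      rw [if_neg (fun h => hb (hinj h.symm))]
    · intro h; exact absurd (Finset.mem_univ l) h
  have hxoff : ∀ a, a ∉ Finset.image cmap Finset.univ → x a = 0 := by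
    intro a ha
    show (∑ l', if a = cmap l' then u l' else 0) = 0
    refine Finset.sum_eq_zero (fun l _ => ?_)
    rw [if_neg]
    intro h
    exact ha (Finset.mem_image.2 ⟨l, Finset.mem_univ l, h.symm⟩)
  -- norms
  have hxu : ∑ a, x a ^ 2 = ∑ l, u l ^ 2 := by
    have h7 : ∑ a ∈ Finset.image cmap Finset.univ, x a ^ 2 = ∑ l, u l ^ 2 := by
      rw [Finset.sum_image (fun p _ q _ h => hinj h)]
      exact Finset.sum_congr rfl (fun l _ => by rw [hxc l])
    rw [← h7]
    exact (Finset.sum_subset (Finset.subset_univ _)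
      (fun a _ ha => by rw [hxoff a ha]; ring)).symm
  have hxy : x ᵥ* Vm = y := by
    funext t
    rw [hy]
    simp only [Matrix.vecMul, Matrix.mulVec, dotProduct, Matrix.star_eq_conjTranspose,
      Matrix.conjTranspose_apply, star_trivial]
    exact Finset.sum_congr rfl (fun a _ => mul_comm _ _)
  have hnormeq : ∑ a, x a ^ 2 = ∑ t, y t ^ 2 := by
    have h3 : x ⬝ᵥ x = x ⬝ᵥ ((Vm * star Vm) *ᵥ x) := by rw [hunit1, Matrix.one_mulVec]
    rw [← Matrix.mulVec_mulVec, Matrix.dotProduct_mulVec, hxy] at h3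
    simpa only [dotProduct, sq] using h3
  -- the quadratic form
  have hq2 : ∑ a, (A.mulVec x a) ^ 2 = ∑ t, μ t * y t ^ 2 := by
    have h4 : ∑ a, (A.mulVec x a) ^ 2 = x ⬝ᵥ ((Aᴴ * A) *ᵥ x) := by
      rw [← Matrix.mulVec_mulVec, Matrix.dotProduct_mulVec, Matrix.vecMul_conjTranspose]
      simp only [star_trivial, Pi.star_def]
      simp only [dotProduct, sq]
    rw [h4, hspec]
    have h5 : (Vm * diagonal μ * star Vm) *ᵥ x = (Vm * diagonal μ) *ᵥ y := by
      rw [hy, Matrix.mulVec_mulVec]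
    rw [h5, ← Matrix.mulVec_mulVec, Matrix.dotProduct_mulVec, hxy]
    simp only [dotProduct, Matrix.mulVec_diagonal]
    exact Finset.sum_congr rfl (fun t _ => by ring)
  -- contradiction
  have hqlow : c0 ^ 2 * (∑ t, y t ^ 2) ≤ ∑ t, μ t * y t ^ 2 := by
    rw [← hq2, ← hnormeq, hxu]
    exact hq u
  have hy0 : ∃ t0, y t0 ≠ 0 := by
    by_contra h
    push_neg at h
    have : ∑ l, u l ^ 2 = 0 := by
      rw [← hxu, hnormeq]
      exact Finset.sum_eq_zero (fun t _ => by rw [h t]; ring)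
    have : ∀ l, u l = 0 := by
      intro l
      have h6 := Finset.sum_eq_zero_iff_of_nonneg
        (fun l (_ : l ∈ Finset.univ) => sq_nonneg (u l)) |>.1 this l (Finset.mem_univ l)
      exact pow_eq_zero_iff (by norm_num) |>.1 h6
    exact hu0 (funext this)
  obtain ⟨t0, ht0⟩ := hy0
  have ht0T : t0 ∉ T := fun h => ht0 (hyT t0 h)
  have hstrict : ∑ t, μ t * y t ^ 2 < ∑ t, c0 ^ 2 * y t ^ 2 := by
    refine Finset.sum_lt_sum (fun t _ => ?_) ⟨t0, Finset.mem_univ t0, ?_⟩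
    · by_cases ht : t ∈ T
      · rw [hyT t ht]; simp
      · have : μ t < c0 ^ 2 := by
          rw [hT, Finset.mem_filter] at ht
          push_neg at ht
          exact ht (Finset.mem_univ t)
        exact mul_le_mul_of_nonneg_right (le_of_lt this) (sq_nonneg _)
    · have hμt0 : μ t0 < c0 ^ 2 := by
        rw [hT, Finset.mem_filter] at ht0T
        push_neg at ht0T
        exact ht0T (Finset.mem_univ t0)
      exact mul_lt_mul_of_pos_right hμt0 (by positivity)
  rw [← Finset.mul_sum] at hstrict
  linarith


open Matrix Finset

section Step
variable {n : ℕ}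

lemma rowi_bound (R : Matrix (Fin n) (Fin n) ℝ) (i j : Fin n)
    (hmax : ∀ a b, |R a b| ≤ |R i j|)
    (σ : Fin n → Fin n)
    (hdd : ∀ a, ∑ c ∈ Finset.univ.erase (σ a), |R a c| ≤ |R a (σ a)|) :
    ∑ c ∈ Finset.univ.erase j, |R i c| ≤ |R i j| := by
  by_cases hej : σ i = j
  · rw [← hej]; exact hdd i
  · have h1 : ∑ c ∈ (Finset.univ.erase (σ i)).erase j, |R i c|
        = ∑ c ∈ Finset.univ.erase (σ i), |R i c| - |R i j| :=
      Finset.sum_erase_eq_sub (Finset.mem_erase.2 ⟨fun h => hej h.symm, Finset.mem_univ j⟩)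
    have h2 : ∑ c ∈ (Finset.univ.erase j).erase (σ i), |R i c|
        = ∑ c ∈ Finset.univ.erase j, |R i c| - |R i (σ i)| :=
      Finset.sum_erase_eq_sub (Finset.mem_erase.2 ⟨hej, Finset.mem_univ _⟩)
    have h3 : (Finset.univ.erase (σ i)).erase j = (Finset.univ.erase j).erase (σ i) :=
      Finset.erase_right_comm
    rw [h3] at h1
    have h4 := hdd i
    have h5 := hmax i (σ i)
    linarith

lemma step_rowsum (R : Matrix (Fin n) (Fin n) ℝ) (i j : Fin n) (hne : R i j ≠ 0)
    (hrowi : ∑ c ∈ Finset.univ.erase j, |R i c| ≤ |R i j|) (a : Fin n) :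
    ∑ c, |(R - (R i j)⁻¹ • Matrix.of fun a b => R a j * R i b) a c| ≤ ∑ c, |R a c| := by
  set R' := R - (R i j)⁻¹ • Matrix.of fun a b => R a j * R i b with hR'def
  set t : ℝ := (R i j)⁻¹ * R a j with ht
  have hR' : ∀ a' c, R' a' c = R a' c - ((R i j)⁻¹ * R a' j) * R i c := by
    intro a' c
    simp only [hR'def, Matrix.sub_apply, Matrix.smul_apply, Matrix.of_apply, smul_eq_mul]
    ring
  have hcolj : R' a j = 0 := by
    rw [hR']
    field_simp
    ring
  have habst : |t| * |R i j| = |R a j| := by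
    rw [ht, abs_mul, abs_inv]
    field_simp
  have h0 : ∑ c, |R' a c| = ∑ c ∈ Finset.univ.erase j, |R' a c| + |R' a j| :=
    (Finset.sum_erase_add _ _ (Finset.mem_univ j)).symm
  have h1 : ∑ c ∈ Finset.univ.erase j, |R' a c|
      ≤ ∑ c ∈ Finset.univ.erase j, (|R a c| + |t| * |R i c|) := by
    refine Finset.sum_le_sum (fun c _ => ?_)
    rw [hR', ← ht]
    calc |R a c - t * R i c| ≤ |R a c| + |t * R i c| := abs_sub _ _
      _ = |R a c| + |t| * |R i c| := by rw [abs_mul]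
  have h2 : ∑ c ∈ Finset.univ.erase j, (|R a c| + |t| * |R i c|)
      = (∑ c ∈ Finset.univ.erase j, |R a c|) + |t| * ∑ c ∈ Finset.univ.erase j, |R i c| := by
    rw [Finset.sum_add_distrib, Finset.mul_sum]
  have h3 : ∑ c ∈ Finset.univ.erase j, |R a c| = ∑ c, |R a c| - |R a j| :=
    Finset.sum_erase_eq_sub (Finset.mem_univ j)
  have h4 : |t| * ∑ c ∈ Finset.univ.erase j, |R i c| ≤ |t| * |R i j| :=
    mul_le_mul_of_nonneg_left hrowi (abs_nonneg t)
  rw [habst] at h4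
  rw [h0, hcolj, abs_zero, add_zero]
  linarith

lemma step_preserve (R : Matrix (Fin n) (Fin n) ℝ) (i j : Fin n)
    (hne : R i j ≠ 0) (hmax : ∀ a b, |R a b| ≤ |R i j|)
    (σ : Fin n → Fin n) (hinj : Function.Injective σ)
    (hdd : ∀ a, ∑ c ∈ Finset.univ.erase (σ a), |R a c| ≤ |R a (σ a)|) :
    ∃ σ' : Fin n → Fin n, Function.Injective σ' ∧
      ∀ a, ∑ c ∈ Finset.univ.erase (σ' a),
          |(R - (R i j)⁻¹ • Matrix.of fun a b => R a j * R i b) a c|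
        ≤ |(R - (R i j)⁻¹ • Matrix.of fun a b => R a j * R i b) a (σ' a)| := by
  set R' := R - (R i j)⁻¹ • Matrix.of fun a b => R a j * R i b with hR'def
  have hR' : ∀ a c, R' a c = R a c - ((R i j)⁻¹ * R a j) * R i c := by
    intro a c
    simp only [hR'def, Matrix.sub_apply, Matrix.smul_apply, Matrix.of_apply, smul_eq_mul]
    ring
  have hcolj : ∀ a, R' a j = 0 := by
    intro a; rw [hR']; field_simp; ring
  have hrowiz : ∀ c, R' i c = 0 := by
    intro c; rw [hR']; field_simp; ring
  have hrowi : ∑ c ∈ Finset.univ.erase j, |R i c| ≤ |R i j| := rowi_bound R i j hmax σ hdd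
  have hsurj : Function.Surjective σ := Finite.surjective_of_injective hinj
  obtain ⟨astar, hastar⟩ := hsurj j
  refine ⟨σ ∘ (Equiv.swap i astar), hinj.comp (Equiv.swap i astar).injective, ?_⟩
  intro a
  by_cases hai : a = i
  · -- dead row i : everything is zero
    have hswap : Equiv.swap i astar a = astar := by rw [hai, Equiv.swap_apply_left]
    simp only [Function.comp_apply, hswap, hastar]
    rw [hai, hcolj _, abs_zero]
    refine le_of_eq (Finset.sum_eq_zero (fun c _ => ?_))
    rw [hrowiz _, abs_zero]
  by_cases has : a = astar
  · -- recentered row astar : new center e = σ i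
    have hswap : Equiv.swap i astar a = i := by rw [has, Equiv.swap_apply_right]
    simp only [Function.comp_apply, hswap]
    set e := σ i with he
    have hσa : σ a = j := by rw [has, hastar]
    have hie : i ≠ a := fun h => hai h.symm
    have hej : e ≠ j := by
      intro h
      exact hai (has.trans (hinj (h.trans hastar.symm)).symm)
    set t : ℝ := (R i j)⁻¹ * R a j with ht
    have habst : |t| * |R i j| = |R a j| := by
      rw [ht, abs_mul, abs_inv]; field_simp
    have hjmem : j ∈ Finset.univ.erase e :=
      Finset.mem_erase.2 ⟨fun h => hej h.symm, Finset.mem_univ j⟩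
    have h0 : ∑ c ∈ Finset.univ.erase e, |R' a c|
        = ∑ c ∈ (Finset.univ.erase e).erase j, |R' a c| := by
      rw [Finset.sum_erase_eq_sub hjmem, hcolj a, abs_zero, sub_zero]
    have h1 : ∑ c ∈ (Finset.univ.erase e).erase j, |R' a c|
        ≤ ∑ c ∈ (Finset.univ.erase e).erase j, (|R a c| + |t| * |R i c|) := by
      refine Finset.sum_le_sum (fun c _ => ?_)
      rw [hR', ← ht]
      calc |R a c - t * R i c| ≤ |R a c| + |t * R i c| := abs_sub _ _
        _ = |R a c| + |t| * |R i c| := by rw [abs_mul]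
    have h2 : ∑ c ∈ (Finset.univ.erase e).erase j, (|R a c| + |t| * |R i c|)
        = (∑ c ∈ (Finset.univ.erase e).erase j, |R a c|)
          + |t| * ∑ c ∈ (Finset.univ.erase e).erase j, |R i c| := by
      rw [Finset.sum_add_distrib, Finset.mul_sum]
    have h3 : ∑ c ∈ (Finset.univ.erase e).erase j, |R a c|
        = ∑ c ∈ Finset.univ.erase j, |R a c| - |R a e| := by
      rw [Finset.erase_right_comm]
      exact Finset.sum_erase_eq_sub (Finset.mem_erase.2 ⟨hej, Finset.mem_univ e⟩)
    have h3' : ∑ c ∈ Finset.univ.erase j, |R a c| ≤ |R a j| := by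
      have := hdd a
      rwa [hσa] at this
    have h4 : ∑ c ∈ (Finset.univ.erase e).erase j, |R i c|
        = ∑ c ∈ Finset.univ.erase e, |R i c| - |R i j| :=
      Finset.sum_erase_eq_sub hjmem
    have h4' : ∑ c ∈ Finset.univ.erase e, |R i c| ≤ |R i e| := hdd i
    have h5 : |t| * |R i e| - |R a e| ≤ |R' a e| := by
      rw [hR', ← ht, ← abs_mul, abs_sub_comm]
      exact abs_sub_abs_le_abs_sub _ _
    have ht0 : 0 ≤ |t| := abs_nonneg t
    have hm1 : |t| * (∑ c ∈ Finset.univ.erase e, |R i c| - |R i j|)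
        ≤ |t| * (|R i e| - |R i j|) := by
      refine mul_le_mul_of_nonneg_left ?_ ht0
      linarith
    rw [h0]
    refine le_trans h1 ?_
    rw [h2, h3, h4]
    have hexp : |t| * (|R i e| - |R i j|) = |t| * |R i e| - |R a j| := by
      rw [mul_sub, habst]
    linarith
  · -- generic row
    have hswap : Equiv.swap i astar a = a := Equiv.swap_apply_of_ne_of_ne hai has
    simp only [Function.comp_apply, hswap]
    set d := σ a with hd
    have hdj : d ≠ j := by
      intro h
      exact has (hinj (h.trans hastar.symm))
    set t : ℝ := (R i j)⁻¹ * R a j with ht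
    have habst : |t| * |R i j| = |R a j| := by
      rw [ht, abs_mul, abs_inv]; field_simp
    have hjmem : j ∈ Finset.univ.erase d :=
      Finset.mem_erase.2 ⟨fun h => hdj h.symm, Finset.mem_univ j⟩
    have h0 : ∑ c ∈ Finset.univ.erase d, |R' a c|
        = ∑ c ∈ (Finset.univ.erase d).erase j, |R' a c| := by
      rw [Finset.sum_erase_eq_sub hjmem, hcolj a, abs_zero, sub_zero]
    have h1 : ∑ c ∈ (Finset.univ.erase d).erase j, |R' a c|
        ≤ ∑ c ∈ (Finset.univ.erase d).erase j, (|R a c| + |t| * |R i c|) := by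
      refine Finset.sum_le_sum (fun c _ => ?_)
      rw [hR', ← ht]
      calc |R a c - t * R i c| ≤ |R a c| + |t * R i c| := abs_sub _ _
        _ = |R a c| + |t| * |R i c| := by rw [abs_mul]
    have h2 : ∑ c ∈ (Finset.univ.erase d).erase j, (|R a c| + |t| * |R i c|)
        = (∑ c ∈ (Finset.univ.erase d).erase j, |R a c|)
          + |t| * ∑ c ∈ (Finset.univ.erase d).erase j, |R i c| := by
      rw [Finset.sum_add_distrib, Finset.mul_sum]
    have h3 : ∑ c ∈ (Finset.univ.erase d).erase j, |R a c|
        = ∑ c ∈ Finset.univ.erase d, |R a c| - |R a j| :=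
      Finset.sum_erase_eq_sub hjmem
    have h3' : ∑ c ∈ Finset.univ.erase d, |R a c| ≤ |R a d| := hdd a
    have h4 : ∑ c ∈ (Finset.univ.erase d).erase j, |R i c|
        = ∑ c ∈ Finset.univ.erase j, |R i c| - |R i d| := by
      rw [Finset.erase_right_comm]
      exact Finset.sum_erase_eq_sub (Finset.mem_erase.2 ⟨hdj, Finset.mem_univ d⟩)
    have h5 : |R a d| - |t| * |R i d| ≤ |R' a d| := by
      rw [hR', ← ht, ← abs_mul]
      exact abs_sub_abs_le_abs_sub _ _
    have ht0 : 0 ≤ |t| := abs_nonneg t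
    have hm1 : |t| * (∑ c ∈ Finset.univ.erase j, |R i c| - |R i d|)
        ≤ |t| * (|R i j| - |R i d|) := by
      refine mul_le_mul_of_nonneg_left ?_ ht0
      linarith
    rw [h0]
    refine le_trans h1 ?_
    rw [h2, h3, h4]
    have hexp : |t| * (|R i j| - |R i d|) = |R a j| - |t| * |R i d| := by
      rw [mul_sub, habst]
    linarith

end Step


open Matrix Finset

section Seq
variable {n m : ℕ} {A : Matrix (Fin n) (Fin n) ℝ} {R : ℕ → Matrix (Fin n) (Fin n) ℝ}
  {i j : ℕ → Fin n}

lemma entry_formula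
    (hrec : ∀ k < m, R (k + 1) =
      R k - (R k (i k) (j k))⁻¹ • Matrix.of (fun a b => R k a (j k) * R k (i k) b)) :
    ∀ k < m, ∀ a c : Fin n,
    R (k+1) a c = R k a c - (R k (i k) (j k))⁻¹ * (R k a (j k) * R k (i k) c) := by
  intro k hk a c
  rw [hrec k hk]
  simp [Matrix.sub_apply, Matrix.smul_apply, Matrix.of_apply, smul_eq_mul]

lemma dead_rows_cols
    (hne : ∀ k < m, R k (i k) (j k) ≠ 0)
    (hrec : ∀ k < m, R (k + 1) =
      R k - (R k (i k) (j k))⁻¹ • Matrix.of (fun a b => R k a (j k) * R k (i k) b)) :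
    ∀ k, k ≤ m → ∀ l, l < k →
    (∀ c, R k (i l) c = 0) ∧ (∀ a, R k a (j l) = 0) := by
  intro k
  induction k with
  | zero => intro _ l hl; omega
  | succ k IH =>
    intro hk l hl
    have hkm : k < m := by omega
    have hef := entry_formula hrec k hkm
    have hπ := hne k hkm
    rcases Nat.lt_succ_iff_lt_or_eq.1 hl with h | h
    · obtain ⟨hrow, hcol⟩ := IH (by omega) l h
      constructor
      · intro c
        rw [hef (i l) c, hrow c, hrow (j k)]
        ring
      · intro a
        rw [hef a (j l), hcol a, hcol (i k)]
        ring
    · subst h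
      constructor
      · intro c
        rw [hef (i l) c, inv_mul_cancel_left₀ hπ, sub_self]
      · intro a
        rw [hef a (j l)]
        rw [mul_comm (R l a (j l)) (R l (i l) (j l)), inv_mul_cancel_left₀ hπ, sub_self]

lemma telescope
    (h0 : R 0 = A)
    (hrec : ∀ k < m, R (k + 1) =
      R k - (R k (i k) (j k))⁻¹ • Matrix.of (fun a b => R k a (j k) * R k (i k) b)) :
    ∀ k, k ≤ m → A = R k + ∑ t ∈ Finset.range k,
    (R t (i t) (j t))⁻¹ • Matrix.of (fun a b => R t a (j t) * R t (i t) b) := by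
  intro k
  induction k with
  | zero => intro _; simp [h0]
  | succ k IH =>
    intro hk
    have hkm : k < m := by omega
    rw [Finset.sum_range_succ, hrec k hkm]
    have h2 := IH (by omega)
    rw [h2]
    abel

lemma invariant_chain
    (h0 : R 0 = A)
    (hdd : ∀ a : Fin n, ∑ b ∈ Finset.univ.erase a, |A a b| ≤ |A a a|)
    (hne : ∀ k < m, R k (i k) (j k) ≠ 0)
    (hmax : ∀ k < m, ∀ a b : Fin n, |R k a b| ≤ |R k (i k) (j k)|)
    (hrec : ∀ k < m, R (k + 1) =
      R k - (R k (i k) (j k))⁻¹ • Matrix.of (fun a b => R k a (j k) * R k (i k) b)) :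
    ∀ k, k ≤ m → ∃ σ : Fin n → Fin n, Function.Injective σ ∧
    ∀ a, ∑ c ∈ Finset.univ.erase (σ a), |R k a c| ≤ |R k a (σ a)| := by
  intro k
  induction k with
  | zero =>
    intro _
    refine ⟨id, Function.injective_id, ?_⟩
    intro a
    simpa [h0] using hdd a
  | succ k IH =>
    intro hk
    have hkm : k < m := by omega
    obtain ⟨σ, hinj, hσ⟩ := IH (by omega)
    obtain ⟨σ', hinj', hσ'⟩ :=
      step_preserve (R k) (i k) (j k) (hne k hkm) (hmax k hkm) σ hinj hσ
    refine ⟨σ', hinj', ?_⟩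
    intro a
    rw [hrec k hkm]
    exact hσ' a

lemma rowi_chain
    (h0 : R 0 = A)
    (hdd : ∀ a : Fin n, ∑ b ∈ Finset.univ.erase a, |A a b| ≤ |A a a|)
    (hne : ∀ k < m, R k (i k) (j k) ≠ 0)
    (hmax : ∀ k < m, ∀ a b : Fin n, |R k a b| ≤ |R k (i k) (j k)|)
    (hrec : ∀ k < m, R (k + 1) =
      R k - (R k (i k) (j k))⁻¹ • Matrix.of (fun a b => R k a (j k) * R k (i k) b)) :
    ∀ k < m,
    ∑ c ∈ Finset.univ.erase (j k), |R k (i k) c| ≤ |R k (i k) (j k)| := by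
  intro k hk
  obtain ⟨σ, hinj, hσ⟩ := invariant_chain h0 hdd hne hmax hrec k (le_of_lt hk)
  exact rowi_bound (R k) (i k) (j k) (hmax k hk) σ hσ

lemma rowsum_chain
    (h0 : R 0 = A)
    (hdd : ∀ a : Fin n, ∑ b ∈ Finset.univ.erase a, |A a b| ≤ |A a a|)
    (hne : ∀ k < m, R k (i k) (j k) ≠ 0)
    (hmax : ∀ k < m, ∀ a b : Fin n, |R k a b| ≤ |R k (i k) (j k)|)
    (hrec : ∀ k < m, R (k + 1) =
      R k - (R k (i k) (j k))⁻¹ • Matrix.of (fun a b => R k a (j k) * R k (i k) b)) :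
    ∀ l k, l ≤ k → k ≤ m → ∀ a,
    ∑ c, |R k a c| ≤ ∑ c, |R l a c| := by
  intro l k
  induction k with
  | zero =>
    intro h1 _ a
    obtain rfl : l = 0 := by omega
    exact le_refl _
  | succ k IH =>
    intro h1 h2 a
    by_cases h : l = k + 1
    · subst h; exact le_refl _
    · have hlk : l ≤ k := by omega
      have hkm : k < m := by omega
      have hstep : ∑ c, |R (k+1) a c| ≤ ∑ c, |R k a c| := by
        rw [hrec k hkm]
        exact step_rowsum (R k) (i k) (j k) (hne k hkm)
          (rowi_chain h0 hdd hne hmax hrec k hkm) a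
      exact le_trans hstep (IH hlk (by omega) a)

end Seq


open Matrix Finset

lemma cross_identity {n m : ℕ} (A : Matrix (Fin n) (Fin n) ℝ)
    (R : ℕ → Matrix (Fin n) (Fin n) ℝ) (i j : ℕ → Fin n)
    (hne : ∀ k < m, R k (i k) (j k) ≠ 0)
    (hdeadk : ∀ k, k ≤ m → ∀ l, l < k → (∀ c, R k (i l) c = 0) ∧ (∀ a, R k a (j l) = 0))
    (htel : A = R m + ∑ t ∈ Finset.range m,
      (R t (i t) (j t))⁻¹ • Matrix.of (fun a b => R t a (j t) * R t (i t) b)) :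
    A - A.submatrix id (fun t : Fin m => j t.1) *
        (A.submatrix (fun t : Fin m => i t.1) (fun t : Fin m => j t.1))⁻¹ *
        A.submatrix (fun t : Fin m => i t.1) id = R m := by
  classical
  set X : Matrix (Fin n) (Fin m) ℝ :=
    Matrix.of (fun a t => (R t.1 (i t.1) (j t.1))⁻¹ * R t.1 a (j t.1)) with hX
  set Y : Matrix (Fin m) (Fin n) ℝ := Matrix.of (fun t b => R t.1 (i t.1) b) with hY
  have hAXY : A = R m + X * Y := by
    rw [htel]
    congr 1
    ext a b
    rw [Matrix.sum_apply, Matrix.mul_apply]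
    rw [Finset.sum_range (fun t => ((R t (i t) (j t))⁻¹ •
      Matrix.of (fun a b => R t a (j t) * R t (i t) b) : Matrix (Fin n) (Fin n) ℝ) a b)]
    refine Finset.sum_congr rfl (fun t _ => ?_)
    simp only [Matrix.smul_apply, Matrix.of_apply, smul_eq_mul, hX, hY]
    ring
  set XI : Matrix (Fin m) (Fin m) ℝ := X.submatrix (fun t : Fin m => i t.1) id with hXI
  set YJ : Matrix (Fin m) (Fin m) ℝ := Y.submatrix id (fun t : Fin m => j t.1) with hYJ
  have hXIup : ∀ t t' : Fin m, t < t' → XI t t' = 0 := by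
    intro t t' htt
    have hdead := (hdeadk t'.1 (le_of_lt t'.2) t.1 htt).1
    simp only [hXI, Matrix.submatrix_apply, hX, Matrix.of_apply, id_eq]
    rw [hdead (j t'.1)]
    ring
  have hXIdiag : ∀ t : Fin m, XI t t = 1 := by
    intro t
    simp only [hXI, Matrix.submatrix_apply, hX, Matrix.of_apply, id_eq]
    exact inv_mul_cancel₀ (hne t.1 t.2)
  have hYJlow : ∀ t t' : Fin m, t' < t → YJ t t' = 0 := by
    intro t t' htt
    have hdead := (hdeadk t.1 (le_of_lt t.2) t'.1 htt).2
    simp only [hYJ, Matrix.submatrix_apply, hY, Matrix.of_apply, id_eq]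
    exact hdead (i t.1)
  have hdetXI : XI.det = 1 := by
    have hbt : XI.BlockTriangular ⇑OrderDual.toDual := fun a b hab => hXIup a b hab
    rw [Matrix.det_of_lowerTriangular XI hbt]
    simp [hXIdiag]
  have hdetYJ : IsUnit YJ.det := by
    have hbt : YJ.BlockTriangular id := fun a b hab => hYJlow a b hab
    rw [Matrix.det_of_upperTriangular hbt]
    refine isUnit_iff_ne_zero.2 (Finset.prod_ne_zero_iff.2 (fun t _ => ?_))
    simp only [hYJ, Matrix.submatrix_apply, hY, Matrix.of_apply, id_eq]
    exact hne t.1 t.2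
  have hdXI : IsUnit XI.det := by rw [hdetXI]; exact isUnit_one
  -- submatrix identities
  have hC : A.submatrix id (fun t : Fin m => j t.1) = X * YJ := by
    ext a t
    simp only [Matrix.submatrix_apply, id_eq]
    rw [Matrix.ext_iff.2 hAXY a (j t.1), Matrix.add_apply]
    rw [(hdeadk m (le_refl m) t.1 t.2).2 a]
    rw [Matrix.mul_apply, Matrix.mul_apply, zero_add]
    exact Finset.sum_congr rfl (fun s _ => rfl)
  have hW : A.submatrix (fun t : Fin m => i t.1) id = XI * Y := by
    ext t b
    simp only [Matrix.submatrix_apply, id_eq]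
    rw [Matrix.ext_iff.2 hAXY (i t.1) b, Matrix.add_apply]
    rw [(hdeadk m (le_refl m) t.1 t.2).1 b]
    rw [Matrix.mul_apply, Matrix.mul_apply, zero_add]
    exact Finset.sum_congr rfl (fun s _ => rfl)
  have hG : A.submatrix (fun t : Fin m => i t.1) (fun t : Fin m => j t.1) = XI * YJ := by
    ext t t'
    simp only [Matrix.submatrix_apply, id_eq]
    rw [Matrix.ext_iff.2 hAXY (i t.1) (j t'.1), Matrix.add_apply]
    rw [(hdeadk m (le_refl m) t.1 t.2).1 (j t'.1)]
    rw [Matrix.mul_apply, Matrix.mul_apply, zero_add]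
    exact Finset.sum_congr rfl (fun s _ => rfl)
  rw [hC, hW, hG, Matrix.mul_inv_rev]
  have hcalc : X * YJ * (YJ⁻¹ * XI⁻¹) * (XI * Y) = X * Y := by
    rw [Matrix.mul_assoc X YJ (YJ⁻¹ * XI⁻¹), ← Matrix.mul_assoc YJ YJ⁻¹ XI⁻¹,
      Matrix.mul_nonsing_inv YJ hdetYJ, Matrix.one_mul,
      Matrix.mul_assoc X XI⁻¹ (XI * Y), ← Matrix.mul_assoc XI⁻¹ XI Y,
      Matrix.nonsing_inv_mul XI hdXI, Matrix.one_mul]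
  rw [hcalc, hAXY]
  abel

end CrossApproxAux

/-- Error bound for cross approximation with complete pivoting on a row
diagonally dominant matrix of rank at least `m`:
`‖A − A(:,J)A(I,J)⁻¹A(I,:)‖_max ≤ (m+1) · 2^(m+1) · σ_{m+1}(A)`. -/
theorem crossApprox_error_bound_diagDominant {n m : ℕ} (hmn : m < n)
    (A : Matrix (Fin n) (Fin n) ℝ)
    (hdd : ∀ a : Fin n, ∑ b ∈ Finset.univ.erase a, |A a b| ≤ |A a a|)
    (hrank : m ≤ A.rank)
    (R : ℕ → Matrix (Fin n) (Fin n) ℝ) (i j : ℕ → Fin n)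
    (halg : CrossApproxSeq A m R i j) :
    maxNorm (A -
        A.submatrix id (fun t : Fin m => j t.1) *
          (A.submatrix (fun t : Fin m => i t.1) (fun t : Fin m => j t.1))⁻¹ *
          A.submatrix (fun t : Fin m => i t.1) id) ≤
      (m + 1) * 2 ^ (m + 1) * sigma A (m + 1) := by
  classical
  obtain ⟨h0, hstep⟩ := halg
  have hne : ∀ k < m, R k (i k) (j k) ≠ 0 := fun k hk => (hstep k hk).1
  have hmax : ∀ k < m, ∀ a b : Fin n, |R k a b| ≤ |R k (i k) (j k)| :=
    fun k hk => (hstep k hk).2.1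
  have hrec : ∀ k < m, R (k + 1) =
      R k - (R k (i k) (j k))⁻¹ • Matrix.of (fun a b => R k a (j k) * R k (i k) b) :=
    fun k hk => (hstep k hk).2.2
  have hdeadk := dead_rows_cols hne hrec
  have htel := telescope h0 hrec m (le_refl m)
  rw [cross_identity A R i j hne hdeadk htel]
  have hn : 0 < n := by omega
  obtain ⟨q0, _, hq0⟩ := Finset.exists_max_image (Finset.univ : Finset (Fin n × Fin n))
    (fun q => |R m q.1 q.2|) ⟨(⟨0, hn⟩, ⟨0, hn⟩), Finset.mem_univ _⟩
  obtain ⟨a, b⟩ := q0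
  have hab : ∀ x y : Fin n, |R m x y| ≤ |R m a b| := fun x y => hq0 (x, y) (Finset.mem_univ _)
  set p := |R m a b| with hpdef
  have hmaxE : maxNorm (R m) ≤ p :=
    Real.iSup_le (fun x => Real.iSup_le (fun y => hab x y) (abs_nonneg _)) (abs_nonneg _)
  by_cases hp0 : R m a b = 0
  · refine le_trans hmaxE ?_
    have hpz : p = 0 := by rw [hpdef, hp0, abs_zero]
    rw [hpz]
    exact mul_nonneg (by positivity) (sigma_nonneg A (m+1))
  -- main case
  have hppos : 0 < p := abs_pos.2 hp0
  have hfreshi : ∀ l, l < m → i l ≠ a := by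
    intro l hl h
    have h2 := (hdeadk m (le_refl m) l hl).1 b
    rw [h] at h2
    exact hp0 h2
  have hfreshj : ∀ l, l < m → j l ≠ b := by
    intro l hl h
    have h2 := (hdeadk m (le_refl m) l hl).2 a
    rw [h] at h2
    exact hp0 h2
  have hinji : ∀ l k, l < k → k < m → i l ≠ i k := by
    intro l k hlk hk h
    have h2 := (hdeadk k (le_of_lt hk) l hlk).1 (j k)
    rw [h] at h2
    exact hne k hk h2
  have hinjj : ∀ l k, l < k → k < m → j l ≠ j k := by
    intro l k hlk hk h
    have h2 := (hdeadk k (le_of_lt hk) l hlk).2 (i k)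
    rw [h] at h2
    exact hne k hk h2
  set r : Fin (m+1) → Fin n := fun k => if (k:ℕ) < m then i (k:ℕ) else a with hrdef
  set c : Fin (m+1) → Fin n := fun k => if (k:ℕ) < m then j (k:ℕ) else b with hcdef
  have hrval : ∀ k : Fin (m+1), (k:ℕ) < m → r k = i (k:ℕ) := by
    intro k hk; simp only [hrdef]; rw [if_pos hk]
  have hrm : ∀ k : Fin (m+1), ¬ ((k:ℕ) < m) → r k = a := by
    intro k hk; simp only [hrdef]; rw [if_neg hk]
  have hcval : ∀ k : Fin (m+1), (k:ℕ) < m → c k = j (k:ℕ) := by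
    intro k hk; simp only [hcdef]; rw [if_pos hk]
  have hcm : ∀ k : Fin (m+1), ¬ ((k:ℕ) < m) → c k = b := by
    intro k hk; simp only [hcdef]; rw [if_neg hk]
  have hrinj : Function.Injective r := by
    intro k k' h
    by_cases hk : (k:ℕ) < m <;> by_cases hk' : (k':ℕ) < m
    · rw [hrval k hk, hrval k' hk'] at h
      rcases lt_trichotomy (k:ℕ) (k':ℕ) with ht | ht | ht
      · exact absurd h (hinji _ _ ht hk')
      · exact Fin.ext ht
      · exact absurd h.symm (hinji _ _ ht hk)
    · rw [hrval k hk, hrm k' hk'] at h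
      exact absurd h (hfreshi _ hk)
    · rw [hrm k hk, hrval k' hk'] at h
      exact absurd h.symm (hfreshi _ hk')
    · exact Fin.ext (by omega)
  have hcinj : Function.Injective c := by
    intro k k' h
    by_cases hk : (k:ℕ) < m <;> by_cases hk' : (k':ℕ) < m
    · rw [hcval k hk, hcval k' hk'] at h
      rcases lt_trichotomy (k:ℕ) (k':ℕ) with ht | ht | ht
      · exact absurd h (hinjj _ _ ht hk')
      · exact Fin.ext ht
      · exact absurd h.symm (hinjj _ _ ht hk)
    · rw [hcval k hk, hcm k' hk'] at h
      exact absurd h (hfreshj _ hk)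
    · rw [hcm k hk, hcval k' hk'] at h
      exact absurd h.symm (hfreshj _ hk')
    · exact Fin.ext (by omega)
  -- L and U factors
  set U : Matrix (Fin (m+1)) (Fin (m+1)) ℝ :=
    Matrix.of (fun k l => R (k:ℕ) (r k) (c l)) with hUdef
  set L : Matrix (Fin (m+1)) (Fin (m+1)) ℝ :=
    Matrix.of (fun k l => (R (l:ℕ) (r l) (c l))⁻¹ * R (l:ℕ) (r k) (c l)) with hLdef
  have hUapp : ∀ k l, U k l = R (k:ℕ) (r k) (c l) := fun k l => rfl
  have hLapp : ∀ k l, L k l = (R (l:ℕ) (r l) (c l))⁻¹ * R (l:ℕ) (r k) (c l) := fun k l => rfl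
  have hUdiagne : ∀ k, U k k ≠ 0 := by
    intro k
    rw [hUapp]
    by_cases hk : (k:ℕ) < m
    · rw [hrval k hk, hcval k hk]; exact hne _ hk
    · rw [hrm k hk, hcm k hk]
      have hkm : (k:ℕ) = m := by have := k.isLt; omega
      rw [hkm]; exact hp0
  have hUup : ∀ k l : Fin (m+1), l < k → U k l = 0 := by
    intro k l h
    have hlk : (l:ℕ) < (k:ℕ) := h
    have hlm : (l:ℕ) < m := by have := k.isLt; omega
    rw [hUapp, hcval l hlm]
    exact (hdeadk (k:ℕ) (by have := k.isLt; omega) (l:ℕ) hlk).2 (r k)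
  have hLlow : ∀ k l : Fin (m+1), k < l → L k l = 0 := by
    intro k l h
    have hkl : (k:ℕ) < (l:ℕ) := h
    have hkm : (k:ℕ) < m := by have := l.isLt; omega
    rw [hLapp, hrval k hkm, (hdeadk (l:ℕ) (by have := l.isLt; omega) (k:ℕ) hkl).1 (c l)]
    ring
  have hLdiag : ∀ k, L k k = 1 := by
    intro k
    rw [hLapp]
    exact inv_mul_cancel₀ (by rw [← hUapp k k]; exact hUdiagne k)
  have hLent : ∀ k l : Fin (m+1), |L k l| ≤ 1 := by
    intro k l
    rcases lt_or_ge k l with h | h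
    · rw [hLlow k l h, abs_zero]; norm_num
    · by_cases hlm : (l:ℕ) < m
      · rw [hLapp, abs_mul, abs_inv, hrval l hlm, hcval l hlm]
        have h1 := hmax (l:ℕ) hlm (r k) (j (l:ℕ))
        have h2 : (0:ℝ) < |R (l:ℕ) (i (l:ℕ)) (j (l:ℕ))| := abs_pos.2 (hne _ hlm)
        calc |R (l:ℕ) (i (l:ℕ)) (j (l:ℕ))|⁻¹ * |R (l:ℕ) (r k) (j (l:ℕ))|
            ≤ |R (l:ℕ) (i (l:ℕ)) (j (l:ℕ))|⁻¹ * |R (l:ℕ) (i (l:ℕ)) (j (l:ℕ))| :=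
              mul_le_mul_of_nonneg_left h1 (inv_nonneg.2 (abs_nonneg _))
          _ = 1 := inv_mul_cancel₀ (ne_of_gt h2)
      · have hk : k = l := by
          refine Fin.ext ?_
          have h3 : (l:ℕ) ≤ (k:ℕ) := h
          have := k.isLt
          omega
        rw [hk, hLdiag, abs_one]
  have hRdiag_p : ∀ l : Fin (m+1), p ≤ 2 * |R (l:ℕ) (r l) (c l)| := by
    intro l
    by_cases hlm : (l:ℕ) < m
    · obtain ⟨σ, hσinj, hσ⟩ := invariant_chain h0 hdd hne hmax hrec (l:ℕ) (le_of_lt hlm)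
      have h1 : p ≤ ∑ col, |R m a col| := by
        rw [hpdef]
        exact Finset.single_le_sum (f := fun col => |R m a col|)
          (fun col _ => abs_nonneg _) (Finset.mem_univ b)
      have h2 : ∑ col, |R m a col| ≤ ∑ col, |R (l:ℕ) a col| :=
        rowsum_chain h0 hdd hne hmax hrec (l:ℕ) m (le_of_lt hlm) (le_refl m) a
      have h3 : ∑ col, |R (l:ℕ) a col|
          = |R (l:ℕ) a (σ a)| + ∑ col ∈ Finset.univ.erase (σ a), |R (l:ℕ) a col| :=
        (Finset.add_sum_erase _ _ (Finset.mem_univ (σ a))).symm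
      have h4 := hσ a
      have h5 := hmax (l:ℕ) hlm a (σ a)
      rw [hrval l hlm, hcval l hlm]
      linarith
    · rw [hrm l hlm, hcm l hlm]
      have hkm : (l:ℕ) = m := by have := l.isLt; omega
      rw [hkm, ← hpdef]
      linarith
  have hUdd : ∀ k : Fin (m+1), ∑ l ∈ Finset.Ioi k, |U k l| ≤ |U k k| := by
    intro k
    by_cases hk : (k:ℕ) < m
    · have hrk := hrval k hk
      have hck := hcval k hk
      have himg : ∑ l ∈ Finset.Ioi k, |U k l|
          = ∑ col ∈ (Finset.Ioi k).image c, |R (k:ℕ) (i (k:ℕ)) col| := by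
        rw [Finset.sum_image (fun x _ y _ h => hcinj h)]
        refine Finset.sum_congr rfl (fun l _ => ?_)
        rw [hUapp, hrk]
      rw [himg]
      have hsub : (Finset.Ioi k).image c ⊆ Finset.univ.erase (j (k:ℕ)) := by
        intro col hcol
        obtain ⟨l, hl, hlc⟩ := Finset.mem_image.1 hcol
        refine Finset.mem_erase.2 ⟨?_, Finset.mem_univ _⟩
        rw [← hlc, ← hck]
        exact fun h => (ne_of_gt (Finset.mem_Ioi.1 hl)) (hcinj h)
      have h9 := rowi_chain h0 hdd hne hmax hrec (k:ℕ) hk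
      rw [hUapp k k, hrk, hck]
      exact le_trans (Finset.sum_le_sum_of_subset_of_nonneg hsub
        (fun _ _ _ => abs_nonneg _)) h9
    · have hIoi : Finset.Ioi k = (∅ : Finset (Fin (m+1))) := by
        refine Finset.eq_empty_of_forall_notMem (fun l hl => ?_)
        have h2 : k < l := Finset.mem_Ioi.1 hl
        have h3 : (k:ℕ) < (l:ℕ) := h2
        have := l.isLt
        omega
      rw [hIoi, Finset.sum_empty]
      exact abs_nonneg _
  -- M = L * U
  have htelE : ∀ x y : Fin n, A x y = R m x y + ∑ t ∈ Finset.range m,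
      (R t (i t) (j t))⁻¹ * (R t x (j t) * R t (i t) y) := by
    intro x y
    rw [Matrix.ext_iff.2 htel x y, Matrix.add_apply, Matrix.sum_apply]
    simp only [Matrix.smul_apply, Matrix.of_apply, smul_eq_mul]
  have hM : A.submatrix r c = L * U := by
    ext k l
    rw [Matrix.submatrix_apply, Matrix.mul_apply, Fin.sum_univ_castSucc]
    have hcastlt : ∀ t : Fin m, ((t.castSucc : Fin (m+1)):ℕ) < m := fun t => by
      rw [Fin.coe_castSucc]; exact t.isLt
    have hlastm : ¬ (((Fin.last m : Fin (m+1))):ℕ) < m := by rw [Fin.val_last]; omega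
    have hmain : ∑ t : Fin m, L k t.castSucc * U t.castSucc l
        = ∑ t ∈ Finset.range m, (R t (i t) (j t))⁻¹ * (R t (r k) (j t) * R t (i t) (c l)) := by
      rw [Finset.sum_range (fun t => (R t (i t) (j t))⁻¹ * (R t (r k) (j t) * R t (i t) (c l)))]
      refine Finset.sum_congr rfl (fun t _ => ?_)
      rw [hLapp k t.castSucc, hUapp t.castSucc l,
        hrval _ (hcastlt t), hcval _ (hcastlt t), Fin.coe_castSucc]
      ring
    have hlast : L k (Fin.last m) * U (Fin.last m) l = R m (r k) (c l) := by
      rw [hLapp k (Fin.last m), hUapp (Fin.last m) l, hrm _ hlastm, hcm _ hlastm, Fin.val_last]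
      by_cases hk : (k:ℕ) < m
      · rw [hrval k hk, (hdeadk m (le_refl m) (k:ℕ) hk).1 b,
          (hdeadk m (le_refl m) (k:ℕ) hk).1 (c l)]
        ring
      · rw [hrm k hk, inv_mul_cancel₀ hp0, one_mul]
    rw [hmain, hlast, htelE (r k) (c l)]
    ring
  -- inverse bounds
  have hUddfact := upperTri_inv_entry_bound U hUup hUdiagne hUdd
  have hLfact := lowerTri_inv_colsum_bound L hLlow hLdiag hLent
  have hUentry : ∀ k l : Fin (m+1), |U⁻¹ k l| ≤ 2 / p := by
    intro k l
    refine le_trans (hUddfact.2 k l) ?_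
    have h1 := hRdiag_p l
    rw [← hUapp l l] at h1
    have h2 : (0:ℝ) < |U l l| := abs_pos.2 (hUdiagne l)
    rw [div_le_div_iff₀ h2 hppos]
    linarith
  have hMdetu : IsUnit (A.submatrix r c).det := by
    rw [hM, Matrix.det_mul]
    exact hLfact.1.mul hUddfact.1
  have hMinv : ∀ k l : Fin (m+1), |(A.submatrix r c)⁻¹ k l| ≤ 2^(m+1) / p := by
    intro k l
    rw [hM, Matrix.mul_inv_rev, Matrix.mul_apply]
    calc |∑ t, U⁻¹ k t * L⁻¹ t l|
        ≤ ∑ t, |U⁻¹ k t * L⁻¹ t l| := Finset.abs_sum_le_sum_abs _ _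
      _ ≤ ∑ t, (2/p) * |L⁻¹ t l| := by
          refine Finset.sum_le_sum (fun t _ => ?_)
          rw [abs_mul]
          exact mul_le_mul_of_nonneg_right (hUentry k t) (abs_nonneg _)
      _ = (2/p) * ∑ t, |L⁻¹ t l| := by rw [← Finset.mul_sum]
      _ ≤ (2/p) * 2^((m+1)-1) := by
          refine mul_le_mul_of_nonneg_left (hLfact.2 l) (by positivity)
      _ = 2^(m+1)/p := by
          have he : m + 1 - 1 = m := by omega
          rw [he, pow_succ]
          field_simp
  set c0 : ℝ := p / (((m:ℝ)+1) * 2^(m+1)) with hc0def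
  have hc0pos : 0 < c0 := by positivity
  -- the quadratic bound for the pivot block
  have hq : ∀ v : Fin (m+1) → ℝ,
      c0^2 * (∑ l, v l^2) ≤ ∑ k, ((A.submatrix r c).mulVec v k)^2 := by
    intro v
    set w := (A.submatrix r c).mulVec v with hwdef
    have hvw : ∀ l, v l = ∑ k, (A.submatrix r c)⁻¹ l k * w k := by
      intro l
      have h1 : (A.submatrix r c)⁻¹.mulVec w = v := by
        rw [hwdef, Matrix.mulVec_mulVec, Matrix.nonsing_inv_mul _ hMdetu, Matrix.one_mulVec]
      conv_lhs => rw [← h1]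
      simp [Matrix.mulVec, dotProduct]
    have hvl : ∀ l, (v l)^2 ≤ ((((m:ℝ)+1) * (2^(m+1)/p)^2)) * ∑ k, w k^2 := by
      intro l
      rw [hvw l]
      refine le_trans (Finset.sum_mul_sq_le_sq_mul_sq Finset.univ _ _) ?_
      refine mul_le_mul_of_nonneg_right ?_ (Finset.sum_nonneg (fun k _ => sq_nonneg _))
      calc ∑ k, ((A.submatrix r c)⁻¹ l k)^2
          ≤ ∑ _k : Fin (m+1), ((2:ℝ)^(m+1)/p)^2 := by
            refine Finset.sum_le_sum (fun k _ => ?_)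
            rw [← sq_abs]
            exact pow_le_pow_left₀ (abs_nonneg _) (hMinv l k) 2
        _ = (((m:ℝ)+1) * (2^(m+1)/p)^2) := by
            rw [Finset.sum_const, Finset.card_univ, Fintype.card_fin, nsmul_eq_mul]
            push_cast
            ring
    have hsum : ∑ l, (v l)^2
        ≤ ((m:ℝ)+1) * (((((m:ℝ)+1) * (2^(m+1)/p)^2)) * ∑ k, w k^2) := by
      calc ∑ l, (v l)^2
          ≤ ∑ _l : Fin (m+1), (((((m:ℝ)+1) * (2^(m+1)/p)^2)) * ∑ k, w k^2) :=
            Finset.sum_le_sum (fun l _ => hvl l)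
        _ = _ := by
            rw [Finset.sum_const, Finset.card_univ, Fintype.card_fin, nsmul_eq_mul]
            push_cast
            ring
    have hkey : c0^2 * (((m:ℝ)+1) * (((m:ℝ)+1) * (2^(m+1)/p)^2)) = 1 := by
      rw [hc0def]
      field_simp
    calc c0^2 * ∑ l, v l^2
        ≤ c0^2 * (((m:ℝ)+1) * (((((m:ℝ)+1) * (2^(m+1)/p)^2)) * ∑ k, w k^2)) :=
          mul_le_mul_of_nonneg_left hsum (sq_nonneg c0)
      _ = (c0^2 * (((m:ℝ)+1) * (((m:ℝ)+1) * (2^(m+1)/p)^2))) * ∑ k, w k^2 := by ring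
      _ = ∑ k, w k^2 := by rw [hkey, one_mul]
  -- transfer the quadratic bound to A
  have hqA : ∀ v : Fin (m+1) → ℝ, c0^2 * (∑ l, v l^2) ≤
      ∑ x, (A.mulVec (fun y => ∑ l, if y = c l then v l else 0) x)^2 := by
    intro v
    refine le_trans (hq v) ?_
    have hAr : ∀ k : Fin (m+1),
        (A.mulVec (fun y => ∑ l, if y = c l then v l else 0)) (r k)
          = (A.submatrix r c).mulVec v k := by
      intro k
      simp only [Matrix.mulVec, dotProduct, Matrix.submatrix_apply]
      calc ∑ y, A (r k) y * ∑ l, (if y = c l then v l else 0)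
          = ∑ y, ∑ l, (if y = c l then A (r k) y * v l else 0) := by
            refine Finset.sum_congr rfl (fun y _ => ?_)
            rw [Finset.mul_sum]
            refine Finset.sum_congr rfl (fun l _ => ?_)
            split <;> simp
        _ = ∑ l, ∑ y, (if y = c l then A (r k) y * v l else 0) := Finset.sum_comm
        _ = ∑ l, A (r k) (c l) * v l := by
            refine Finset.sum_congr rfl (fun l _ => ?_)
            rw [Finset.sum_ite_eq' Finset.univ (c l) (fun y => A (r k) y * v l),
              if_pos (Finset.mem_univ _)]
    calc ∑ k, ((A.submatrix r c).mulVec v k)^2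
        = ∑ k : Fin (m+1), ((A.mulVec (fun y => ∑ l, if y = c l then v l else 0)) (r k))^2 :=
          Finset.sum_congr rfl (fun k _ => by rw [hAr k])
      _ = ∑ x ∈ Finset.image r Finset.univ,
            ((A.mulVec (fun y => ∑ l, if y = c l then v l else 0)) x)^2 :=
          (Finset.sum_image
            (f := fun x => ((A.mulVec (fun y => ∑ l, if y = c l then v l else 0)) x)^2)
            (g := r) (s := Finset.univ) (fun x _ y _ h => hrinj h)).symm
      _ ≤ ∑ x, ((A.mulVec (fun y => ∑ l, if y = c l then v l else 0)) x)^2 :=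
          Finset.sum_le_sum_of_subset_of_nonneg (Finset.subset_univ _)
            (fun _ _ _ => sq_nonneg _)
  have hcount := count_svals_ge A c hcinj c0 (le_of_lt hc0pos) hqA
  have hsig := sigma_ge_of_count A c0 (by omega : 0 < m + 1) (by omega : m + 1 ≤ n) hcount
  have hfinal : p = ((m:ℝ)+1) * 2^(m+1) * c0 := by
    rw [hc0def]
    field_simp
  calc maxNorm (R m) ≤ p := hmaxE
    _ = ((m:ℝ)+1) * 2^(m+1) * c0 := hfinal
    _ ≤ ((m:ℝ)+1) * 2^(m+1) * sigma A (m+1) :=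
        mul_le_mul_of_nonneg_left hsig (by positivity)
    _ = (m + 1) * 2 ^ (m + 1) * sigma A (m + 1) := by push_cast; ring
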